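/- arXiv:1704.07974 — 3 statements merged into one kernel-verified Lean document; each statement's English description precedes it below -/
import Mathlib

section
/- Let γ ∈ ℂ \ {0}, 0 ≤ λ ≤ 1, -1 ≤ B < A ≤ 1, and m ∈ ℕ with m ≥ 2. If |γ(A−B) − B(m−2)| ≥ m−2, then |γ|²(A−B)² + Σ_{k=2}^{m−1} [ | |γ(A−B) − B(k−1)|² − (k−1)² | / ((k−1)!)² ] · Π_{j=0}^{k−2} |γ(A−B) − jB|² = Π_{j=0}^{m−2} |γ(A−B) − jB|² / ((m−2)!)². -/
open Finset

lemma key (z : ℂ) (B : ℝ) : ∀ n : ℕ,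
    (∀ k : ℕ, 2 ≤ k → k ≤ n + 1 → ((k:ℝ) - 1) ≤ ‖z - B * ((k : ℂ) - 1)‖) →
    ‖z‖ ^ 2 +
      ∑ k ∈ Finset.Icc 2 (n + 1),
        (|‖z - B * ((k : ℂ) - 1)‖ ^ 2 - ((k : ℝ) - 1) ^ 2| /
            ((Nat.factorial (k - 1) : ℝ)) ^ 2) *
          ∏ j ∈ Finset.range (k - 1), ‖z - (j : ℂ) * B‖ ^ 2 =
      (∏ j ∈ Finset.range (n + 1), ‖z - (j : ℂ) * B‖ ^ 2) /
        ((Nat.factorial n : ℝ)) ^ 2 := by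
  intro n
  induction n with
  | zero =>
    intro _
    simp
  | succ n ih =>
    intro hz
    rw [Finset.sum_Icc_succ_top (by omega : 2 ≤ n + 2), ← add_assoc,
        ih (fun k hk hk' => hz k hk (by omega))]
    simp only [Nat.add_sub_cancel]
    have hge : (((n+1+1 : ℕ)) : ℝ) - 1 ≤ ‖z - B * (((n+1+1:ℕ) : ℂ) - 1)‖ :=
      hz (n+1+1) (by omega) (by omega)
    have habs : |‖z - B * (((n+1+1:ℕ):ℂ) - 1)‖ ^ 2 - (((n+1+1:ℕ):ℝ) - 1) ^ 2|
        = ‖z - B * (((n+1+1:ℕ):ℂ) - 1)‖ ^ 2 - (((n+1+1:ℕ):ℝ) - 1) ^ 2 := by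
      rw [abs_of_nonneg]
      have h1 : (0:ℝ) ≤ (((n+1+1:ℕ)):ℝ) - 1 := by push_cast; linarith
      nlinarith
    have hw : z - ((n+1:ℕ):ℂ) * (B:ℂ) = z - (B:ℂ) * (((n+1+1:ℕ) : ℂ) - 1) := by
      push_cast; ring
    have hprod : ∏ j ∈ Finset.range (n+1+1), ‖z - (j:ℂ)*B‖^2
        = (∏ j ∈ Finset.range (n+1), ‖z - (j:ℂ)*B‖^2) *
            ‖z - (B:ℂ)*(((n+1+1:ℕ):ℂ)-1)‖^2 := by
      rw [Finset.prod_range_succ, hw]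
    rw [hprod, habs]
    have hfac : ((Nat.factorial (n+1) : ℝ)) = ((n:ℝ)+1) * (Nat.factorial n : ℝ) := by
      rw [Nat.factorial_succ]; push_cast; ring
    rw [hfac]
    have hf0 : (Nat.factorial n : ℝ) ≠ 0 := Nat.cast_ne_zero.mpr (Nat.factorial_ne_zero n)
    have hn0 : ((n:ℝ)+1) ≠ 0 := by positivity
    push_cast
    field_simp
    simp only [mul_comm (B:ℂ)]
    ring

theorem stmt0 (γ : ℂ) (hγ : γ ≠ 0) (lam : ℝ) (hl0 : 0 ≤ lam) (hl1 : lam ≤ 1)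
    (A B : ℝ) (hB : -1 ≤ B) (hBA : B < A) (hA : A ≤ 1) (m : ℕ) (hm : 2 ≤ m)
    (h : (m : ℝ) - 2 ≤ ‖γ * ((A : ℂ) - B) - B * ((m : ℂ) - 2)‖) :
    ‖γ‖ ^ 2 * (A - B) ^ 2 +
      ∑ k ∈ Finset.Icc 2 (m - 1),
        (|‖γ * ((A : ℂ) - B) - B * ((k : ℂ) - 1)‖ ^ 2 - ((k : ℝ) - 1) ^ 2| /
            ((Nat.factorial (k - 1) : ℝ)) ^ 2) *
          ∏ j ∈ Finset.range (k - 1), ‖γ * ((A : ℂ) - B) - (j : ℂ) * B‖ ^ 2 =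
      (∏ j ∈ Finset.range (m - 1), ‖γ * ((A : ℂ) - B) - (j : ℂ) * B‖ ^ 2) /
        ((Nat.factorial (m - 2) : ℝ)) ^ 2 := by
  obtain ⟨n, rfl⟩ : ∃ n, m = n + 2 := ⟨m - 2, by omega⟩
  set z := γ * ((A : ℂ) - B) with hzdef
  have hB1 : |B| ≤ 1 := abs_le.mpr ⟨hB, le_trans hBA.le hA⟩
  have hz : ∀ k : ℕ, 2 ≤ k → k ≤ n + 1 → ((k:ℝ) - 1) ≤ ‖z - B * ((k : ℂ) - 1)‖ := by
    intro k hk2 hk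
    have tri : ‖z - B * (((n+2:ℕ) : ℂ) - 2)‖ ≤
        ‖z - B * ((k : ℂ) - 1)‖ +
        ‖(B:ℂ) * ((k : ℂ) - 1) - B * (((n+2:ℕ) : ℂ) - 2)‖ :=
      norm_sub_le_norm_sub_add_norm_sub _ _ _
    have heq : (B:ℂ) * ((k : ℂ) - 1) - B * (((n+2:ℕ) : ℂ) - 2) =
        ((B * (((k:ℝ) - 1) - (((n+2:ℕ):ℝ) - 2)) : ℝ) : ℂ) := by push_cast; ring
    rw [heq, Complex.norm_real, Real.norm_eq_abs, abs_mul] at tri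
    have hkr : (k:ℝ) ≤ (n:ℝ) + 1 := by exact_mod_cast hk
    have habs2 : |((k:ℝ) - 1) - (((n+2:ℕ):ℝ) - 2)| = ((n:ℝ) + 1) - (k:ℝ) := by
      push_cast
      rw [abs_of_nonpos (by linarith)]
      ring
    rw [habs2] at tri
    have hb : |B| * (((n:ℝ) + 1) - (k:ℝ)) ≤ ((n:ℝ) + 1) - (k:ℝ) := by
      nlinarith [abs_nonneg B]
    have h' : ((n+2:ℕ):ℝ) - 2 ≤ ‖z - B * (((n+2:ℕ) : ℂ) - 2)‖ := by
      exact_mod_cast h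
    have hc : ((n+2:ℕ):ℝ) = (n:ℝ)+2 := by push_cast; ring
    linarith
  have := key z B n hz
  have hz2 : ‖z‖ ^ 2 = ‖γ‖ ^ 2 * (A - B) ^ 2 := by
    rw [hzdef]
    have : ((A:ℂ) - B) = ((A - B : ℝ) : ℂ) := by push_cast; ring
    rw [this, norm_mul, Complex.norm_real, Real.norm_eq_abs, mul_pow, sq_abs]
  have h1 : n + 2 - 1 = n + 1 := by omega
  have h2 : n + 2 - 2 = n := by omega
  rw [h1, h2, ← hz2]
  exact this
end

section
/- Let p be analytic on the unit disk 𝔻 with p(0) = 1, and let A = e^{−2iα} with |α| < π/2. If z p'(z)/p(z)² is subordinate to h₁(z) = (A+1)z/(1+Az)² on 𝔻, then p is subordinate to (1+Az)/(1−z) on 𝔻. -/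
open Complex Metric Set

/-- The Koebe-type function `u/(1+u)²` omits real values `t ≥ 1/4` on the unit disk. -/
lemma koebe_omits (t : ℝ) (ht : (1:ℝ)/4 ≤ t) (u : ℂ) (hu : ‖u‖ < 1) :
    u / (1 + u)^2 ≠ (t : ℂ) := by
  intro h
  have h1u : (1 : ℂ) + u ≠ 0 := by
    intro h0
    have : u = -1 := by linear_combination h0
    simp [this] at hu
  have htpos : (0:ℝ) < t := lt_of_lt_of_le (by norm_num) ht
  have heq : (t : ℂ) * u^2 + (2*t - 1) * u + t = 0 := by
    have h' := (div_eq_iff (pow_ne_zero 2 h1u)).mp h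
    linear_combination -h'
  have hu0 : u ≠ 0 := by
    intro h0
    rw [h0] at heq
    simp at heq
    norm_num [heq] at htpos
  set v := starRingEnd ℂ u with hv
  have heqc : (t : ℂ) * v^2 + (2*t - 1) * v + t = 0 := by
    have h' := congrArg (starRingEnd ℂ) heq
    push_cast at h'
    simp only [map_add, map_mul, map_pow, map_sub, Complex.conj_ofReal, map_ofNat,
      map_one, map_zero] at h'
    convert h' using 2 <;> push_cast <;> ring
  have hfact : (u - v) * ((t:ℂ) * (u + v) + (2*t - 1)) = 0 := by
    linear_combination heq - heqc
  rcases mul_eq_zero.mp hfact with hcase | hcase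
  · -- u is real
    have him : u.im = 0 := by
      have h' := sub_eq_zero.mp hcase
      have h2 : u.im = -u.im := by
        have := congrArg Complex.im h'
        simpa [hv] using this
      linarith
    have hureal : u = (u.re : ℂ) := (Complex.ext (by simp) (by simp [him])).symm
    set x := u.re with hx
    have hxne : x ≠ 0 := by
      intro h0; apply hu0; rw [hureal, h0]; simp
    have hxlt : |x| < 1 := by
      rw [hureal] at hu; simpa using hu
    have heqr : t * x^2 + (2*t - 1) * x + t = 0 := by
      rw [hureal] at heq
      exact_mod_cast heq
    rcases lt_or_gt_of_ne hxne with hneg | hpos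
    · nlinarith [sq_nonneg (x + 1), abs_lt.mp hxlt]
    · nlinarith [sq_nonneg (x - 1), abs_lt.mp hxlt]
  · have h1 : (t : ℂ) * (1 - u * v) = 0 := by
      linear_combination heq - u * hcase
    have h2 : (1 : ℂ) - u * v = 0 := by
      rcases mul_eq_zero.mp h1 with h' | h'
      · exact absurd (by exact_mod_cast h' : t = 0) htpos.ne'
      · exact h'
    rw [hv, Complex.mul_conj] at h2
    have h3 : Complex.normSq u = 1 := by
      have h5 : ((Complex.normSq u : ℂ)) = 1 := by linear_combination -h2
      exact_mod_cast h5
    have h4 : ‖u‖ = 1 := by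
      have := Complex.sq_norm u
      nlinarith [norm_nonneg u]
    linarith

/-- Jack's lemma. -/
lemma jack_lemma (w : ℂ → ℂ) (r r' : ℝ) (hr : 0 < r) (hrr' : r < r')
    (hw : DifferentiableOn ℂ w (ball 0 r'))
    (hw0 : w 0 = 0)
    (hbd : ∀ z : ℂ, ‖z‖ ≤ r → ‖w z‖ ≤ 1)
    (hbd' : ∀ z : ℂ, ‖z‖ < r → ‖w z‖ < 1)
    (z₀ : ℂ) (hz₀ : ‖z₀‖ = r) (hwz₀ : ‖w z₀‖ = 1) :
    ∃ k : ℝ, 1 ≤ k ∧ z₀ * deriv w z₀ = (k : ℂ) * w z₀ := by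
  have hz₀r' : z₀ ∈ ball (0:ℂ) r' := by simp [mem_ball_zero_iff, hz₀, hrr']
  have hder : HasDerivAt w (deriv w z₀) z₀ :=
    (hw.differentiableAt (isOpen_ball.mem_nhds hz₀r')).hasDerivAt
  set d := deriv w z₀ with hd
  set w₀ := w z₀ with hw₀
  have hnsq : Complex.normSq w₀ = 1 := by
    rw [← Complex.sq_norm, hwz₀]; norm_num
  set κ := (starRingEnd ℂ) w₀ * (z₀ * d) with hκ
  have hrne : ((r:ℝ):ℂ) ≠ 0 := by exact_mod_cast hr.ne'
  -- Schwarz estimate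
  have hschwarz : ∀ z : ℂ, ‖z‖ < r → ‖w z‖ ≤ ‖z‖ / r := by
    intro z hz
    have h1 : DifferentiableOn ℂ w (ball 0 r) :=
      hw.mono (ball_subset_ball hrr'.le)
    have h2 : MapsTo w (ball (0:ℂ) r) (ball (w 0) 1) := by
      intro x hx
      rw [hw0, mem_ball_zero_iff]
      exact hbd' x (mem_ball_zero_iff.mp hx)
    have := Complex.dist_le_div_mul_dist_of_mapsTo_ball h1 (h2.mono_right ball_subset_closedBall) (mem_ball_zero_iff.mpr hz)
    rw [hw0, dist_zero_right, dist_zero_right] at this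
    calc ‖w z‖ ≤ 1 / r * ‖z‖ := this
    _ = ‖z‖ / r := by ring
  -- radial derivative: Re κ ≥ 1
  set ζ := z₀ / r with hζ
  have hζnorm : ‖ζ‖ = 1 := by
    rw [hζ, norm_div, hz₀, Complex.norm_real, Real.norm_eq_abs, abs_of_pos hr,
      div_self hr.ne']
  have hζz₀ : ((r:ℝ):ℂ) * ζ = z₀ := by
    rw [hζ, mul_div_cancel₀ _ hrne]
  have hφder : HasDerivAt (fun s : ℝ => w ((s:ℂ) * ζ)) (ζ • d) r := by
    have h1 : HasDerivAt (fun s : ℝ => (s:ℂ) * ζ) ζ r := by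
      simpa using (Complex.ofRealCLM.hasDerivAt (x := r)).mul_const ζ
    have h2 : HasDerivAt w d ((r:ℂ) * ζ) := by rwa [hζz₀]
    exact h2.scomp r h1
  set f : ℝ → ℝ := fun s => ((starRingEnd ℂ) w₀ * w ((s:ℂ) * ζ)).re with hf
  have hfder : HasDerivAt f ((starRingEnd ℂ) w₀ * (ζ • d)).re r := by
    have h1 : HasDerivAt (fun s : ℝ => (starRingEnd ℂ) w₀ * w ((s:ℂ) * ζ))
        ((starRingEnd ℂ) w₀ * (ζ • d)) r := hφder.const_mul _
    exact Complex.reCLM.hasFDerivAt.comp_hasDerivAt r h1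
  have hfr : f r = 1 := by
    simp only [hf]
    rw [hζz₀, ← hw₀, mul_comm, Complex.mul_conj]
    rw [hnsq]
    norm_num
  have hfle : ∀ s : ℝ, 0 < s → s < r → f s ≤ s / r := by
    intro s hs0 hsr
    have h1 : ‖(s:ℂ) * ζ‖ = s := by
      rw [norm_mul, hζnorm, mul_one, Complex.norm_real, Real.norm_eq_abs, abs_of_pos hs0]
    have h2 : ‖w ((s:ℂ) * ζ)‖ ≤ s / r := by
      have := hschwarz ((s:ℂ) * ζ) (by rw [h1]; exact hsr)
      rwa [h1] at this
    calc f s ≤ ‖(starRingEnd ℂ) w₀ * w ((s:ℂ) * ζ)‖ := Complex.re_le_norm _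
    _ = ‖w ((s:ℂ) * ζ)‖ := by
        rw [norm_mul, RCLike.norm_conj, hwz₀, one_mul]
    _ ≤ s / r := h2
  have hre : (1:ℝ)/r ≤ ((starRingEnd ℂ) w₀ * (ζ • d)).re := by
    have hslope := hasDerivAt_iff_tendsto_slope.mp hfder
    have hslope' : Filter.Tendsto (slope f r) (nhdsWithin r (Set.Iio r))
        (nhds (((starRingEnd ℂ) w₀ * (ζ • d)).re)) :=
      hslope.mono_left (nhdsWithin_mono r (fun x hx => ne_of_lt hx))
    refine ge_of_tendsto hslope' ?_
    filter_upwards [Ioo_mem_nhdsLT_of_mem (⟨half_lt_self hr, le_refl r⟩ :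
        r ∈ Set.Ioc (r/2) r)] with s hs
    rcases hs with ⟨hs1, hs2⟩
    have hs0 : 0 < s := lt_trans (half_pos hr) hs1
    rw [slope_def_field]
    rw [le_div_iff_of_neg (by linarith : s - r < 0)]
    have h3 := hfle s hs0 hs2
    have h4 : s/r - 1 = 1/r * (s - r) := by field_simp
    rw [hfr]
    linarith [h3, h4.le]
  -- tangential derivative: Im κ = 0
  have hψder : HasDerivAt (fun θ : ℝ => w (z₀ * Complex.exp ((θ:ℂ) * I)))
      ((z₀ * I) • d) 0 := by
    have h1 : HasDerivAt (fun θ : ℝ => (θ:ℂ) * I) I 0 := by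
      simpa using (Complex.ofRealCLM.hasDerivAt (x := (0:ℝ))).mul_const I
    have h2 : HasDerivAt (fun θ : ℝ => Complex.exp ((θ:ℂ) * I)) I 0 := by
      have := (Complex.hasDerivAt_exp ((0:ℂ) * I)).scomp (0:ℝ) h1
      simp at this; exact this
    have h3 : HasDerivAt (fun θ : ℝ => z₀ * Complex.exp ((θ:ℂ) * I)) (z₀ * I) 0 :=
      by simpa using h2.const_mul z₀
    have h4 : HasDerivAt w d (z₀ * Complex.exp ((0:ℝ) * I)) := by
      simpa using hder
    exact h4.scomp 0 h3
  set W : ℝ → ℂ := fun θ => w (z₀ * Complex.exp ((θ:ℂ) * I)) with hW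
  have hW0 : W 0 = w₀ := by simp [hW, hw₀]
  set g : ℝ → ℝ := fun θ => (W θ).re ^ 2 + (W θ).im ^ 2 with hg
  have hWre : HasDerivAt (fun θ => (W θ).re) (((z₀ * I) • d).re) 0 :=
    Complex.reCLM.hasFDerivAt.comp_hasDerivAt 0 hψder
  have hWim : HasDerivAt (fun θ => (W θ).im) (((z₀ * I) • d).im) 0 :=
    Complex.imCLM.hasFDerivAt.comp_hasDerivAt 0 hψder
  have hgder : HasDerivAt g
      (2 * (W 0).re * ((z₀ * I) • d).re + 2 * (W 0).im * ((z₀ * I) • d).im) 0 := by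
    have := ((hWre.pow 2).add (hWim.pow 2))
    refine this.congr_deriv ?_
    push_cast
    ring
  have hg0 : g 0 = 1 := by
    rw [hg]
    simp only [hW0]
    have := hnsq
    rw [Complex.normSq_apply] at this
    nlinarith [this]
  have hgmax : IsLocalMax g 0 := by
    apply Filter.Eventually.of_forall
    intro th
    rw [hg0]
    have hnorm : ‖z₀ * Complex.exp ((th:ℂ) * I)‖ ≤ r := by
      rw [norm_mul, Complex.norm_exp]
      simp [hz₀]
    have := hbd _ hnorm
    have h2 : Complex.normSq (W th) ≤ 1 := by
      rw [← Complex.sq_norm]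
      nlinarith [norm_nonneg (W th)]
    rw [Complex.normSq_apply] at h2
    simp only [hg]
    linarith
  have hgzero : 2 * (W 0).re * ((z₀ * I) • d).re + 2 * (W 0).im * ((z₀ * I) • d).im = 0 := by
    have := hgmax.deriv_eq_zero
    rw [hgder.deriv] at this
    exact this
  -- assemble
  have hIm : κ.im = 0 := by
    have h1 : (W 0).re * ((z₀ * I) • d).re + (W 0).im * ((z₀ * I) • d).im
        = ((starRingEnd ℂ) w₀ * ((z₀ * I) * d)).re := by
      rw [hW0]
      simp only [Complex.mul_re, Complex.conj_re, Complex.conj_im, smul_eq_mul]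
      ring
    have h2 : (starRingEnd ℂ) w₀ * ((z₀ * I) * d) = I * κ := by rw [hκ]; ring
    have h3 : ((starRingEnd ℂ) w₀ * ((z₀ * I) * d)).re = -κ.im := by
      rw [h2]; simp [Complex.mul_re]
    have := hgzero
    rw [smul_eq_mul] at this h1
    nlinarith [h1, h3, this]
  have hRe : 1 ≤ κ.re := by
    have h1 : (starRingEnd ℂ) w₀ * (ζ • d) = κ / r := by
      rw [hκ, hζ, smul_eq_mul]
      field_simp
    have h2 : (κ / (r:ℂ)).re = κ.re / r := by
      rw [Complex.div_ofReal_re]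
    rw [h1, h2] at hre
    calc (1:ℝ) = (1/r) * r := by field_simp
    _ ≤ (κ.re / r) * r := by
        apply mul_le_mul_of_nonneg_right hre hr.le
    _ = κ.re := by field_simp
  refine ⟨κ.re, hRe, ?_⟩
  have hκeq : κ = ((κ.re : ℝ) : ℂ) := by
    apply Complex.ext <;> simp [hIm]
  have h1 : κ * w₀ = z₀ * d := by
    rw [hκ]
    have : (starRingEnd ℂ) w₀ * w₀ = ((Complex.normSq w₀ : ℝ) : ℂ) := by
      rw [mul_comm, Complex.mul_conj]
    calc (starRingEnd ℂ) w₀ * (z₀ * d) * w₀ = ((starRingEnd ℂ) w₀ * w₀) * (z₀ * d) := by ring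
    _ = ((Complex.normSq w₀ : ℝ) : ℂ) * (z₀ * d) := by rw [this]
    _ = z₀ * d := by rw [hnsq]; norm_num
  rw [← h1, ← hκeq]

/-- `f` is subordinate to `g` on the unit disk. -/
def Subordinate (f g : ℂ → ℂ) : Prop :=
  ∃ ω : ℂ → ℂ, DifferentiableOn ℂ ω (Metric.ball 0 1) ∧ ω 0 = 0 ∧
    (∀ z ∈ Metric.ball (0 : ℂ) 1, ω z ∈ Metric.ball (0 : ℂ) 1) ∧
    ∀ z ∈ Metric.ball (0 : ℂ) 1, f z = g (ω z)

theorem stmt14 (α : ℝ) (hα : |α| < Real.pi / 2) (A : ℂ)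
    (hA : A = Complex.exp (-2 * α * Complex.I))
    (p : ℂ → ℂ) (hp : DifferentiableOn ℂ p (Metric.ball 0 1)) (hp0 : p 0 = 1)
    (hpne : ∀ z ∈ Metric.ball (0 : ℂ) 1, p z ≠ 0)
    (hsub : Subordinate (fun z => z * deriv p z / (p z) ^ 2)
      (fun z => (A + 1) * z / (1 + A * z) ^ 2)) :
    Subordinate p (fun z => (1 + A * z) / (1 - z)) := by
  -- basic facts about A
  have hAabs : ‖A‖ = 1 := by
    rw [hA, Complex.norm_exp]
    have : (-2 * (α:ℂ) * I).re = 0 := by simp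
    rw [this, Real.exp_zero]
  have hAnsq : Complex.normSq A = 1 := by
    rw [← Complex.sq_norm, hAabs]; norm_num
  have hA2 : A.re ^ 2 + A.im ^ 2 = 1 := by
    rw [Complex.normSq_apply] at hAnsq; nlinarith [hAnsq]
  have hAre : -1 < A.re := by
    have h1 : A = Complex.exp (((-2 * α : ℝ) : ℂ) * I) := by
      rw [hA]; norm_num
    have h2 : A.re = Real.cos (-2 * α) := by
      rw [h1, Complex.exp_ofReal_mul_I_re]
    have h3 : Real.cos (-2 * α) = Real.cos (|2 * α|) := by
      rw [← Real.cos_abs]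
      congr 1
      rw [← abs_neg (2*α)]
      ring_nf
    have h4 : |2 * α| < Real.pi := by
      rw [abs_mul, (abs_two : |(2:ℝ)| = 2)]
      linarith [hα]
    have h5 : Real.cos Real.pi < Real.cos |2 * α| :=
      Real.cos_lt_cos_of_nonneg_of_le_pi (abs_nonneg _) le_rfl h4
    rw [Real.cos_pi] at h5
    rw [h2, h3]
    exact h5
  have h1A : (1 : ℂ) + A ≠ 0 := by
    intro h
    have := congrArg Complex.re h
    simp at this
    linarith
  -- the key quadratic identity
  have hkey : ∀ u : ℂ, Complex.normSq (u + A) - Complex.normSq (u - 1)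
      = 2 * ((1 + (starRingEnd ℂ) A) * u).re := by
    intro u
    simp only [Complex.normSq_apply, Complex.add_re, Complex.add_im, Complex.sub_re,
      Complex.sub_im, Complex.mul_re, Complex.mul_im, Complex.one_re, Complex.one_im,
      Complex.conj_re, Complex.conj_im]
    nlinarith [hA2]
  set c : ℂ → ℝ := fun z => ((1 + (starRingEnd ℂ) A) * p z).re with hc
  have hpA : ∀ z : ℂ, 0 ≤ c z → p z + A ≠ 0 := by
    intro z hz h
    have hpz : p z = -A := by linear_combination h
    rw [hc] at hz
    simp only [hpz] at hz
    have : ((1 + (starRingEnd ℂ) A) * -A).re = -(1 + A.re) := by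
      simp [Complex.mul_re, Complex.conj_re, Complex.conj_im]
      nlinarith [hA2]
    rw [this] at hz
    linarith
  -- norm comparison from c
  have hwle : ∀ z : ℂ, 0 ≤ c z → ‖p z - 1‖ ≤ ‖p z + A‖ := by
    intro z hz
    have := hkey (p z)
    have h2 : Complex.normSq (p z - 1) ≤ Complex.normSq (p z + A) := by
      rw [hc] at hz; linarith
    rw [← Complex.sq_norm, ← Complex.sq_norm] at h2
    nlinarith [norm_nonneg (p z - 1), norm_nonneg (p z + A)]
  have hwlt : ∀ z : ℂ, 0 < c z → ‖p z - 1‖ < ‖p z + A‖ := by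
    intro z hz
    have := hkey (p z)
    have h2 : Complex.normSq (p z - 1) < Complex.normSq (p z + A) := by
      rw [hc] at hz; linarith
    rw [← Complex.sq_norm, ← Complex.sq_norm] at h2
    nlinarith [norm_nonneg (p z - 1), norm_nonneg (p z + A)]
  -- MAIN CLAIM
  have hmain : ∀ z ∈ ball (0:ℂ) 1, 0 < c z := by
    by_contra hcon
    push_neg at hcon
    obtain ⟨z₁, hz₁, hz₁c⟩ := hcon
    rw [mem_ball_zero_iff] at hz₁
    have hccont : ContinuousOn c (ball (0:ℂ) 1) :=
      Complex.continuous_re.comp_continuousOn (continuousOn_const.mul hp.continuousOn)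
    set K : Set ℂ := closedBall (0:ℂ) ‖z₁‖ ∩ c ⁻¹' (Iic 0) with hKdef
    have hKsub : K ⊆ closedBall (0:ℂ) ‖z₁‖ := fun z hz => hz.1
    have hKball : closedBall (0:ℂ) ‖z₁‖ ⊆ ball (0:ℂ) 1 := by
      intro x hx
      rw [mem_closedBall_zero_iff] at hx
      rw [mem_ball_zero_iff]
      linarith
    have hKclosed : IsClosed K :=
      (hccont.mono hKball).preimage_isClosed_of_isClosed Metric.isClosed_closedBall isClosed_Iic
    have hKcompact : IsCompact K :=
      (isCompact_closedBall _ _).of_isClosed_subset hKclosed hKsub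
    have hKne : K.Nonempty := ⟨z₁, by
      constructor
      · exact mem_closedBall_zero_iff.mpr le_rfl
      · exact hz₁c⟩
    obtain ⟨z₀, hz₀K, hz₀min⟩ := hKcompact.exists_isMinOn hKne continuous_norm.continuousOn
    set r₀ : ℝ := ‖z₀‖ with hr₀
    have hr₀le : r₀ ≤ ‖z₁‖ := mem_closedBall_zero_iff.mp hz₀K.1
    have hr₀lt1 : r₀ < 1 := lt_of_le_of_lt hr₀le hz₁
    have hz₀ball : z₀ ∈ ball (0:ℂ) 1 := mem_ball_zero_iff.mpr hr₀lt1
    have hc0 : 0 < c 0 := by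
      have : c 0 = 1 + A.re := by
        simp [hc, hp0, Complex.add_re, Complex.conj_re]
      rw [this]
      linarith
    have hr₀pos : 0 < r₀ := by
      rcases eq_or_lt_of_le (norm_nonneg z₀) with h | h
      · exfalso
        have hz₀eq : z₀ = 0 := by
          rwa [eq_comm, norm_eq_zero] at h
        have := hz₀K.2
        rw [hz₀eq] at this
        simp only [mem_preimage, mem_Iic] at this
        linarith
      · exact h
    have hinterior : ∀ z : ℂ, ‖z‖ < r₀ → 0 < c z := by
      intro z hzn
      by_contra h
      push_neg at h
      have hzK : z ∈ K := ⟨mem_closedBall_zero_iff.mpr (le_trans hzn.le hr₀le), h⟩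
      have h2 : ‖z₀‖ ≤ ‖z‖ := hz₀min hzK
      rw [← hr₀] at h2
      exact absurd h2 (not_le.mpr hzn)
    have hsphere : ∀ z : ℂ, ‖z‖ = r₀ → 0 ≤ c z := by
      intro z hzn
      have hzball : z ∈ ball (0:ℂ) 1 := mem_ball_zero_iff.mpr (by rw [hzn]; exact hr₀lt1)
      have h1 : Filter.Tendsto (fun n : ℕ => (1 - 1/((n:ℝ)+1))) Filter.atTop (nhds 1) := by
        have := tendsto_one_div_add_atTop_nhds_zero_nat (𝕜 := ℝ)
        have h2 := Filter.Tendsto.const_sub (1:ℝ) this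
        simpa using h2
      have htoz : Filter.Tendsto (fun n : ℕ => ((1 - 1/((n:ℝ)+1)) : ℝ) • z)
          Filter.atTop (nhds z) := by
        have := h1.smul_const z
        rwa [one_smul] at this
      have hcat : ContinuousAt c z := hccont.continuousAt (isOpen_ball.mem_nhds hzball)
      have hto : Filter.Tendsto (fun n : ℕ => c (((1 - 1/((n:ℝ)+1)) : ℝ) • z))
          Filter.atTop (nhds (c z)) := hcat.tendsto.comp htoz
      refine ge_of_tendsto hto ?_
      apply Filter.Eventually.of_forall
      intro n
      have hfac0 : (0:ℝ) ≤ 1 - 1/((n:ℝ)+1) := by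
        have : 1/((n:ℝ)+1) ≤ 1 := by
          rw [div_le_one (by positivity)]
          linarith [(Nat.cast_nonneg n : (0:ℝ) ≤ (n:ℝ))]
        linarith
      have hfac1 : 1 - 1/((n:ℝ)+1) < 1 := by
        have : 0 < 1/((n:ℝ)+1) := by positivity
        linarith
      have hnorm : ‖((1 - 1/((n:ℝ)+1)) : ℝ) • z‖ < r₀ := by
        rw [norm_smul, Real.norm_eq_abs, _root_.abs_of_nonneg hfac0, hzn]
        calc (1 - 1/((n:ℝ)+1)) * r₀ < 1 * r₀ := by
              apply mul_lt_mul_of_pos_right hfac1 hr₀pos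
        _ = r₀ := one_mul r₀
      exact (hinterior _ hnorm).le
    have hcz₀ : c z₀ = 0 := by
      have h1 := hz₀K.2
      simp only [mem_preimage, mem_Iic] at h1
      exact le_antisymm h1 (hsphere z₀ rfl)
    have hcnn : ∀ z : ℂ, ‖z‖ ≤ r₀ → 0 ≤ c z := by
      intro z hz
      rcases lt_or_eq_of_le hz with h | h
      · exact (hinterior z h).le
      · exact hsphere z h
    have hpAcb : ∀ z : ℂ, ‖z‖ ≤ r₀ → p z + A ≠ 0 := fun z hz => hpA z (hcnn z hz)
    -- find a slightly larger radius where p + A ≠ 0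
    obtain ⟨r', hr'1, hr'2, hr'3⟩ :
        ∃ r' : ℝ, r₀ < r' ∧ r' < 1 ∧ ∀ z : ℂ, ‖z‖ < r' → p z + A ≠ 0 := by
      set R := (r₀ + 1)/2 with hRdef
      have hr₀R : r₀ < R := by rw [hRdef]; linarith
      have hR1 : R < 1 := by rw [hRdef]; linarith
      have hRball : closedBall (0:ℂ) R ⊆ ball (0:ℂ) 1 := by
        intro x hx
        rw [mem_closedBall_zero_iff] at hx
        rw [mem_ball_zero_iff]
        linarith
      set E : Set ℂ := closedBall (0:ℂ) R ∩ (fun z => p z + A) ⁻¹' {0} with hEdef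
      have hEclosed : IsClosed E := by
        apply ContinuousOn.preimage_isClosed_of_isClosed
          ((hp.continuousOn.mono hRball).add continuousOn_const)
          Metric.isClosed_closedBall isClosed_singleton
      have hEcompact : IsCompact E :=
        (isCompact_closedBall _ _).of_isClosed_subset hEclosed (fun z hz => hz.1)
      rcases E.eq_empty_or_nonempty with hE | hE
      · refine ⟨R, hr₀R, hR1, ?_⟩
        intro z hz h0
        have : z ∈ E := ⟨mem_closedBall_zero_iff.mpr hz.le, by simp [h0]⟩
        rw [hE] at this
        exact this
      · obtain ⟨e, heE, hemin⟩ := hEcompact.exists_isMinOn hE continuous_norm.continuousOn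
        have hegt : r₀ < ‖e‖ := by
          by_contra h
          push_neg at h
          apply hpAcb e h
          have := heE.2
          simpa using this
        refine ⟨min R ((r₀ + ‖e‖)/2), ?_, ?_, ?_⟩
        · apply lt_min hr₀R
          linarith
        · exact lt_of_le_of_lt (min_le_left _ _) hR1
        · intro z hz h0
          have hzR : ‖z‖ < R := lt_of_lt_of_le hz (min_le_left _ _)
          have hzE : z ∈ E := ⟨mem_closedBall_zero_iff.mpr hzR.le, by simp [h0]⟩
          have h1 : ‖e‖ ≤ ‖z‖ := hemin hzE
          have h2 : ‖z‖ < (r₀ + ‖e‖)/2 := lt_of_lt_of_le hz (min_le_right _ _)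
          linarith [h1, h2]
    -- the Jack function
    set w : ℂ → ℂ := fun z => (p z - 1)/(p z + A) with hwdef
    have hballsub : ball (0:ℂ) r' ⊆ ball (0:ℂ) 1 := ball_subset_ball hr'2.le
    have hwdiff : DifferentiableOn ℂ w (ball 0 r') := by
      apply DifferentiableOn.div
      · exact (hp.mono hballsub).sub_const 1
      · exact (hp.mono hballsub).add_const A
      · intro z hz
        exact hr'3 z (mem_ball_zero_iff.mp hz)
    have hw0 : w 0 = 0 := by rw [hwdef]; simp [hp0]
    have hbd : ∀ z : ℂ, ‖z‖ ≤ r₀ → ‖w z‖ ≤ 1 := by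
      intro z hz
      rw [hwdef]
      simp only [norm_div]
      rw [div_le_one (norm_pos_iff.mpr (hpAcb z hz))]
      exact hwle z (hcnn z hz)
    have hbd' : ∀ z : ℂ, ‖z‖ < r₀ → ‖w z‖ < 1 := by
      intro z hz
      rw [hwdef]
      simp only [norm_div]
      rw [div_lt_one (norm_pos_iff.mpr (hpAcb z hz.le))]
      exact hwlt z (hinterior z hz)
    have hPA : p z₀ + A ≠ 0 := hpAcb z₀ le_rfl
    have hnormeq : ‖p z₀ - 1‖ = ‖p z₀ + A‖ := by
      have h3 : ((1 + (starRingEnd ℂ) A) * p z₀).re = 0 := hcz₀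
      have h2 : Complex.normSq (p z₀ + A) = Complex.normSq (p z₀ - 1) := by
        linarith [hkey (p z₀), h3]
      rw [Complex.norm_def, Complex.norm_def, h2]
    have hwz₀ : ‖w z₀‖ = 1 := by
      rw [hwdef]
      simp only [norm_div]
      rw [hnormeq, div_self (norm_pos_iff.mpr hPA).ne']
    obtain ⟨k, hk1, hkeq⟩ := jack_lemma w r₀ r' hr₀pos hr'1 hwdiff hw0 hbd hbd' z₀ rfl hwz₀
    obtain ⟨ω₁, hω₁d, hω₁0, hω₁m, hω₁e⟩ := hsub
    have hEsub0 := hω₁e z₀ hz₀ball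
    simp only at hEsub0
    have hζn : ‖ω₁ z₀‖ < 1 := mem_ball_zero_iff.mp (hω₁m z₀ hz₀ball)
    have hPne : p z₀ ≠ 0 := hpne z₀ hz₀ball
    have hAζ : (1:ℂ) + A * ω₁ z₀ ≠ 0 := by
      intro h
      have h1 : A * ω₁ z₀ = -1 := by linear_combination h
      have h2 : ‖A * ω₁ z₀‖ = 1 := by rw [h1]; simp
      rw [norm_mul, hAabs, one_mul] at h2
      linarith
    have hw₀PA : w z₀ * (p z₀ + A) = p z₀ - 1 := by
      rw [hwdef]
      field_simp
    have hAw : (1:ℂ) + A * w z₀ ≠ 0 := by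
      intro h
      have h1 : ((1:ℂ) + A * w z₀) * (p z₀ + A) = (1+A) * p z₀ := by
        linear_combination A * hw₀PA
      rw [h, zero_mul] at h1
      exact mul_ne_zero h1A hPne h1.symm
    have hpder : HasDerivAt p (deriv p z₀) z₀ :=
      (hp.differentiableAt (isOpen_ball.mem_nhds hz₀ball)).hasDerivAt
    have hwder : HasDerivAt w ((deriv p z₀ * (p z₀ + A) - (p z₀ - 1) * deriv p z₀)
        / (p z₀ + A)^2) z₀ := by
      rw [hwdef]
      exact (hpder.sub_const 1).div (hpder.add_const A) hPA
    have hdw : deriv w z₀ = (deriv p z₀ * (p z₀ + A) - (p z₀ - 1) * deriv p z₀)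
        / (p z₀ + A)^2 := hwder.deriv
    have E1 : z₀ * deriv p z₀ * (1 + A) = (k:ℂ) * (p z₀ - 1) * (p z₀ + A) := by
      have h1 := hkeq
      rw [hdw] at h1
      have h2 : z₀ * (deriv p z₀ * (p z₀ + A) - (p z₀ - 1) * deriv p z₀)
          = (k:ℂ) * w z₀ * (p z₀ + A)^2 := by
        rw [← mul_div_assoc, div_eq_iff (pow_ne_zero 2 hPA)] at h1
        linear_combination h1
      linear_combination h2 + (k:ℂ) * (p z₀ + A) * hw₀PA
    have E2 : z₀ * deriv p z₀ * (1 + A * ω₁ z₀)^2 = (A+1) * ω₁ z₀ * (p z₀)^2 := by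
      rw [div_eq_div_iff (pow_ne_zero 2 hPne) (pow_ne_zero 2 hAζ)] at hEsub0
      linear_combination hEsub0
    have hw₀nsq : (A * w z₀) * (starRingEnd ℂ) (A * w z₀) = 1 := by
      rw [Complex.mul_conj]
      have h1 : Complex.normSq (w z₀) = 1 := by
        rw [← Complex.sq_norm, hwz₀]
        norm_num
      rw [Complex.normSq_mul, hAnsq, one_mul, h1]
      norm_num
    set N : ℝ := Complex.normSq (1 + A * w z₀) with hNdef
    have hNpos : 0 < N := Complex.normSq_pos.mpr hAw
    have hN4 : N ≤ 4 := by
      have h1 : ‖(1:ℂ) + A * w z₀‖ ≤ 2 := by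
        calc ‖(1:ℂ) + A * w z₀‖ ≤ ‖(1:ℂ)‖ + ‖A * w z₀‖ := norm_add_le _ _
        _ = 2 := by
            rw [norm_one, norm_mul, hAabs, one_mul, hwz₀]
            norm_num
      have h2 : N = ‖(1:ℂ) + A * w z₀‖^2 := by
        rw [hNdef, ← Complex.sq_norm]
      nlinarith [norm_nonneg ((1:ℂ) + A * w z₀)]
    have hvN : (A * w z₀) * (N:ℂ) = (1 + A * w z₀)^2 := by
      have h1 : ((N:ℝ):ℂ) = (1 + A * w z₀) * (starRingEnd ℂ) (1 + A * w z₀) := by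
        rw [hNdef]
        exact (Complex.mul_conj _).symm
      have h2 : (starRingEnd ℂ) ((1:ℂ) + A * w z₀) = 1 + (starRingEnd ℂ) (A * w z₀) := by
        simp
      rw [h1, h2]
      linear_combination (1 + A * w z₀) * hw₀nsq
    have hQPA : ((1:ℂ) + A * w z₀) * (p z₀ + A) = (1+A) * p z₀ := by
      linear_combination A * hw₀PA
    have hAN : A * (p z₀ - 1) * (p z₀ + A) * (N:ℂ) = (1+A)^2 * (p z₀)^2 := by
      linear_combination (-(A * (N:ℂ) * (p z₀ + A))) * hw₀PA + (p z₀ + A)^2 * hvN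
        + ((1 + A * w z₀) * (p z₀ + A) + (1+A) * p z₀) * hQPA
    have hkey2 : (A * ω₁ z₀) * (N:ℂ) = (k:ℂ) * (1 + A * ω₁ z₀)^2 := by
      have hcan : ((1:ℂ)+A)^2 * (p z₀)^2 ≠ 0 :=
        mul_ne_zero (pow_ne_zero 2 h1A) (pow_ne_zero 2 hPne)
      apply mul_right_cancel₀ hcan
      linear_combination (-(A * (N:ℂ) * (1+A))) * E2 + A * (N:ℂ) * (1 + A * ω₁ z₀)^2 * E1
        + (k:ℂ) * (1 + A * ω₁ z₀)^2 * hAN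
    have ht : (1:ℝ)/4 ≤ k / N := by
      rw [le_div_iff₀ hNpos]
      nlinarith
    have hAζn : ‖A * ω₁ z₀‖ < 1 := by
      rw [norm_mul, hAabs, one_mul]
      exact hζn
    apply koebe_omits (k/N) ht (A * ω₁ z₀) hAζn
    have htc : (((k/N : ℝ)):ℂ) = (k:ℂ)/(N:ℂ) := by push_cast; ring
    have hNne : ((N:ℝ):ℂ) ≠ 0 := by
      exact_mod_cast hNpos.ne'
    rw [htc, div_eq_div_iff (pow_ne_zero 2 hAζ) hNne]
    linear_combination hkey2
  -- construct the subordinating function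
  refine ⟨fun z => (p z - 1) / (p z + A), ?_, ?_, ?_, ?_⟩
  · exact ((hp.sub_const 1).div (hp.add_const A)
      (fun z hz => hpA z (hmain z hz).le))
  · show (p 0 - 1) / (p 0 + A) = 0
    rw [hp0]; simp
  · intro z hz
    rw [mem_ball_zero_iff, norm_div]
    have h1 := hwlt z (hmain z hz)
    have h2 : (0:ℝ) < ‖p z + A‖ := norm_pos_iff.mpr (hpA z (hmain z hz).le)
    rw [div_lt_one h2]
    exact h1
  · intro z hz
    have h2 : p z + A ≠ 0 := hpA z (hmain z hz).le
    have h3 : (1:ℂ) - (p z - 1) / (p z + A) ≠ 0 := by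
      intro h
      have h4 : (p z - 1) / (p z + A) = 1 := by linear_combination -h
      have h5 : p z - 1 = p z + A := by
        have := (div_eq_one_iff_eq h2).mp h4
        exact this
      apply h1A
      linear_combination -h5
    show p z = (1 + A * ((p z - 1) / (p z + A))) / (1 - (p z - 1) / (p z + A))
    rw [eq_div_iff h3]
    field_simp
    ring
end

section
/- Let f be a starlike function of order α, 0 ≤ α < 1, i.e., f analytic on 𝔻, f(0) = 0, f'(0) = 1, and Re(z f'(z)/f(z)) > α on 𝔻, and set 1/β = 2(1−α). Then |f(z)| ≤ |z|/(1−|z|)^{1/β} for all z ∈ 𝔻, and |f''(0)| ≤ 2/β. -/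
open Metric Set Complex

lemma cara (α : ℝ) (hα1 : α < 1) (g : ℂ → ℂ)
    (hg : DifferentiableOn ℂ g (ball 0 1)) (hg0 : g 0 = 1)
    (hre : ∀ z ∈ ball (0:ℂ) 1, α < (g z).re) :
    (∀ z ∈ ball (0:ℂ) 1,
        (g z).re - 1 ≤ 2*(1-α)*‖z‖/(1-‖z‖)) ∧
      ‖deriv g 0‖ ≤ 2*(1-α) := by
  set w : ℂ → ℂ := fun z => (g z - 1) / (g z + 1 - 2*(α:ℂ)) with hw
  have hden : ∀ z ∈ ball (0:ℂ) 1, g z + 1 - 2*(α:ℂ) ≠ 0 := by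
    intro z hz H
    have h1 : (g z + 1 - 2*(α:ℂ)).re = (g z).re + 1 - 2*α := by simp
    rw [H] at h1
    simp at h1
    have := hre z hz
    linarith
  have habslt : ∀ z ∈ ball (0:ℂ) 1,
      ‖g z - 1‖ < ‖g z + 1 - 2*(α:ℂ)‖ := by
    intro z hz
    have hsq : ‖g z - 1‖ ^ 2 < ‖g z + 1 - 2*(α:ℂ)‖ ^ 2 := by
      rw [Complex.sq_norm, Complex.sq_norm, Complex.normSq_apply, Complex.normSq_apply]
      have := hre z hz
      simp only [Complex.sub_re, Complex.add_re, Complex.one_re, Complex.mul_re,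
        Complex.ofReal_re, Complex.ofReal_im, Complex.sub_im, Complex.add_im,
        Complex.one_im, Complex.mul_im, Complex.re_ofNat, Complex.im_ofNat]
      nlinarith [this, hα1]
    exact lt_of_pow_lt_pow_left₀ 2 (norm_nonneg _) hsq
  have hwlt : ∀ z ∈ ball (0:ℂ) 1, ‖w z‖ < 1 := by
    intro z hz
    rw [hw]
    simp only [norm_div]
    rw [div_lt_one (lt_of_le_of_lt (norm_nonneg _) (habslt z hz))]
    exact habslt z hz
  have hmaps : MapsTo w (ball 0 1) (ball 0 1) := fun z hz =>
    mem_ball_zero_iff.2 (by simpa using hwlt z hz)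
  have hw0 : w 0 = 0 := by simp [hw, hg0]
  have hwd : DifferentiableOn ℂ w (ball 0 1) :=
    (hg.sub_const 1).div ((hg.add_const 1).sub_const _) hden
  have h0mem : (0:ℂ) ∈ ball (0:ℂ) 1 := by simp
  -- Schwarz
  have hwle : ∀ z ∈ ball (0:ℂ) 1, ‖w z‖ ≤ ‖z‖ := by
    intro z hz
    exact Complex.norm_le_norm_of_mapsTo_ball hwd (hmaps.mono_right ball_subset_closedBall) hw0 (mem_ball_zero_iff.1 hz)
  constructor
  · intro z hz
    have hdz := hden z hz
    have e1 : w z * (g z + 1 - 2*(α:ℂ)) = g z - 1 := div_mul_cancel₀ _ hdz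
    have e2 : (1 - w z) * (g z - 1) = 2*(1-(α:ℂ)) * w z := by linear_combination -e1
    have hw1 : (1 : ℂ) - w z ≠ 0 := by
      intro H
      have : ‖w z‖ = 1 := by
        have : w z = 1 := by linear_combination -H
        simp [this]
      linarith [hwlt z hz]
    have e3 : g z - 1 = 2*(1-(α:ℂ)) * w z / (1 - w z) := by
      field_simp at e2 ⊢
      linear_combination e2
    have hre1 : (g z).re - 1 = (g z - 1).re := by simp
    rw [hre1, e3]
    have hle1 : (2*(1-(α:ℂ)) * w z / (1 - w z)).re ≤
        ‖2*(1-(α:ℂ)) * w z / (1 - w z)‖ := Complex.re_le_norm _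
    refine hle1.trans ?_
    rw [norm_div, norm_mul]
    have hca : ‖2*(1-(α:ℂ))‖ = 2*(1-α) := by
      have : (2*(1-(α:ℂ))) = ((2*(1-α) : ℝ) : ℂ) := by push_cast; ring
      rw [this, Complex.norm_real, Real.norm_eq_abs, abs_of_pos (by linarith)]
    rw [hca]
    set a := ‖w z‖ with ha
    set r := ‖z‖ with hr
    have har : a ≤ r := hwle z hz
    have hr1 : r < 1 := mem_ball_zero_iff.1 hz
    have ha0 : 0 ≤ a := norm_nonneg _
    have hr0 : 0 ≤ r := norm_nonneg _
    have hb1 : 1 - a ≤ ‖1 - w z‖ := by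
      have := norm_sub_norm_le (1:ℂ) (w z)
      simpa using this
    have hb0 : (0:ℝ) < 1 - a := by linarith
    have step1 : 2*(1-α) * a / ‖1 - w z‖ ≤ 2*(1-α) * a / (1 - a) := by
      apply div_le_div_of_nonneg_left _ hb0 hb1
      nlinarith
    refine step1.trans ?_
    rw [div_le_div_iff₀ hb0 (by linarith)]
    nlinarith
  · -- derivative bound
    have hgd : HasDerivAt g (deriv g 0) 0 :=
      (hg.differentiableAt (isOpen_ball.mem_nhds h0mem)).hasDerivAt
    have Hw : HasDerivAt w ((deriv g 0 * (g 0 + 1 - 2*(α:ℂ)) - (g 0 - 1) * deriv g 0) /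
        (g 0 + 1 - 2*(α:ℂ))^2) 0 :=
      (hgd.sub_const 1).div ((hgd.add_const 1).sub_const _) (hden 0 h0mem)
    have hne2 : (2 - 2*(α:ℂ)) ≠ 0 := by
      intro H
      have : ((2 - 2*α : ℝ) : ℂ) = 0 := by push_cast; linear_combination H
      have := Complex.ofReal_eq_zero.1 this
      linarith
    have hne2' : ((1:ℂ) + 1 - 2*(α:ℂ)) ≠ 0 := by
      intro H
      exact hne2 (by linear_combination H)
    have hval : deriv w 0 = deriv g 0 / (2 - 2*(α:ℂ)) := by
      rw [Hw.deriv, hg0]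
      rw [div_eq_div_iff (pow_ne_zero 2 hne2') hne2]
      ring
    have hsch : ‖deriv w 0‖ ≤ 1 :=
      Complex.norm_deriv_le_one_of_mapsTo_ball hwd (by rw [hw0]; exact hmaps.mono_right ball_subset_closedBall) one_pos
    have hca : ‖2 - 2*(α:ℂ)‖ = 2 - 2*α := by
      have : (2 - 2*(α:ℂ)) = ((2 - 2*α : ℝ) : ℂ) := by push_cast; ring
      rw [this, Complex.norm_real, Real.norm_eq_abs, abs_of_pos (by linarith)]
    have := hsch
    rw [hval, norm_div, hca, div_le_one (by linarith)] at this
    linarith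

lemma growth (K : ℝ) (hK : 0 ≤ K) (h : ℂ → ℂ) (hd : DifferentiableOn ℂ h (ball 0 1))
    (h0 : h 0 = 1) (hne : ∀ z ∈ ball (0:ℂ) 1, h z ≠ 0)
    (hb : ∀ z ∈ ball (0:ℂ) 1,
      (z * deriv h z / h z).re ≤ K * ‖z‖ / (1 - ‖z‖)) :
    ∀ z ∈ ball (0:ℂ) 1, ‖h z‖ ≤ (1 - ‖z‖) ^ (-K) := by
  intro z hz
  rcases eq_or_ne z 0 with rfl | hz0
  · simp [h0]
  set r := ‖z‖ with hr
  have hr1 : r < 1 := mem_ball_zero_iff.1 hz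
  have hr0 : 0 < r := norm_pos_iff.2 hz0
  have hball : ∀ t ∈ Icc (0:ℝ) 1, ((t:ℂ) * z) ∈ ball (0:ℂ) 1 := by
    intro t ht
    rw [mem_ball_zero_iff, norm_mul, Complex.norm_real, Real.norm_eq_abs,
      _root_.abs_of_nonneg ht.1]
    nlinarith [ht.2]
  set c : ℝ → ℂ := fun t => h ((t:ℂ) * z) with hc
  have hcne : ∀ t ∈ Icc (0:ℝ) 1, c t ≠ 0 := fun t ht => hne _ (hball t ht)
  -- derivative of c
  have Hc : ∀ t ∈ Icc (0:ℝ) 1, HasDerivAt c (z * deriv h ((t:ℂ)*z)) t := by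
    intro t ht
    have Hh : HasDerivAt h (deriv h ((t:ℂ)*z)) ((t:ℂ)*z) :=
      (hd.differentiableAt (isOpen_ball.mem_nhds (hball t ht))).hasDerivAt
    have Hlin : HasDerivAt (fun s : ℝ => ((s:ℂ) * z)) z t := by
      have h1 : HasDerivAt (fun w : ℂ => w * z) z ((t:ℂ)) := by
        simpa using (hasDerivAt_id ((t:ℂ))).mul_const z
      exact h1.comp_ofReal
    have := Hh.scomp t Hlin
    simpa [Function.comp_def, smul_eq_mul] using this
  set F : ℝ → ℝ := fun t => Real.log (‖c t‖) + K * Real.log (1 - t * r) with hF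
  have hpos : ∀ t ∈ Icc (0:ℝ) 1, (0:ℝ) < 1 - t * r := by
    intro t ht
    nlinarith [ht.1, ht.2]
  -- derivative of F
  have HF : ∀ t ∈ Icc (0:ℝ) 1,
      HasDerivAt F ((z * deriv h ((t:ℂ)*z) / c t).re + K * (-r / (1 - t * r))) t := by
    intro t ht
    have hct := hcne t ht
    have hN0 : Complex.normSq (c t) ≠ 0 := by
      simpa [Complex.normSq_eq_zero] using hct
    have hNpos : 0 < Complex.normSq (c t) := Complex.normSq_pos.2 hct
    have Hct := Hc t ht
    set d := z * deriv h ((t:ℂ)*z) with hd'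
    have Hre : HasDerivAt (fun t => (c t).re) d.re t :=
      Complex.reCLM.hasFDerivAt.comp_hasDerivAt t Hct
    have Him : HasDerivAt (fun t => (c t).im) d.im t :=
      Complex.imCLM.hasFDerivAt.comp_hasDerivAt t Hct
    have HN : HasDerivAt (fun t => Complex.normSq (c t))
        (2 * ((c t).re * d.re + (c t).im * d.im)) t := by
      have h2 : HasDerivAt (fun x => (c x).re * (c x).re + (c x).im * (c x).im) _ t :=
        (Hre.mul Hre).add (Him.mul Him)
      have hfun : (fun x => (c x).re * (c x).re + (c x).im * (c x).im)
          = fun t => Complex.normSq (c t) := by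
        funext s; rw [Complex.normSq_apply]
      rw [hfun] at h2
      convert h2 using 1
      ring
    have Hlog1 : HasDerivAt (fun t => Real.log (‖c t‖))
        ((d / c t).re) t := by
      have H1 : HasDerivAt (fun t => Real.log (Complex.normSq (c t)) / 2)
          ((2 * ((c t).re * d.re + (c t).im * d.im)) / Complex.normSq (c t) / 2) t :=
        (HN.log hN0).div_const 2
      have heq : (fun t => Real.log (Complex.normSq (c t)) / 2)
          = fun t => Real.log (‖c t‖) := by
        funext s
        rw [Complex.norm_def, Real.log_sqrt (Complex.normSq_nonneg _)]
      rw [heq] at H1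
      convert H1 using 1
      rw [Complex.div_re]
      field_simp
    have Hin : HasDerivAt (fun t : ℝ => 1 - t * r) (-r) t := by
      simpa using ((hasDerivAt_id t).mul_const r).const_sub 1
    have Hlog2 : HasDerivAt (fun t => Real.log (1 - t * r)) (-r / (1 - t * r)) t :=
      Hin.log (ne_of_gt (hpos t ht))
    exact Hlog1.add (Hlog2.const_mul K)
  -- F antitone
  have hanti : AntitoneOn F (Icc (0:ℝ) 1) := by
    apply antitoneOn_of_deriv_nonpos (convex_Icc 0 1)
    · exact fun t ht => (HF t ht).continuousAt.continuousWithinAt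
    · rw [interior_Icc]
      exact fun t ht =>
        ((HF t (Ioo_subset_Icc_self ht)).differentiableAt).differentiableWithinAt
    · rw [interior_Icc]
      intro t ht
      rw [(HF t (Ioo_subset_Icc_self ht)).deriv]
      have ht0 : 0 < t := ht.1
      have htr : 0 < 1 - t * r := hpos t (Ioo_subset_Icc_self ht)
      have habs : ‖(t:ℂ)*z‖ = t * r := by
        rw [norm_mul, Complex.norm_real, Real.norm_eq_abs, _root_.abs_of_pos ht0]
      have hbb := hb ((t:ℂ)*z) (hball t (Ioo_subset_Icc_self ht))
      rw [habs] at hbb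
      have hsplit : (z * deriv h ((t:ℂ)*z) / c t).re
          = t⁻¹ * (((t:ℂ)*z) * deriv h ((t:ℂ)*z) / h ((t:ℂ)*z)).re := by
        have ht0' : ((t:ℂ)) ≠ 0 := Complex.ofReal_ne_zero.2 (ne_of_gt ht0)
        have hmul : ((t:ℂ)) * (z * deriv h ((t:ℂ)*z) / c t)
            = ((t:ℂ)*z) * deriv h ((t:ℂ)*z) / h ((t:ℂ)*z) := by
          rw [hc]; ring
        have : z * deriv h ((t:ℂ)*z) / c t
            = ((t⁻¹ : ℝ) : ℂ) * (((t:ℂ)*z) * deriv h ((t:ℂ)*z) / h ((t:ℂ)*z)) := by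
          rw [← hmul, Complex.ofReal_inv, ← mul_assoc, inv_mul_cancel₀ ht0', one_mul]
        rw [this, Complex.re_ofReal_mul]
      rw [hsplit]
      have hstep : t⁻¹ * (((t:ℂ)*z) * deriv h ((t:ℂ)*z) / h ((t:ℂ)*z)).re
          ≤ t⁻¹ * (K * (t*r) / (1 - t*r)) := by
        apply mul_le_mul_of_nonneg_left hbb (by positivity)
      have heq2 : t⁻¹ * (K * (t*r) / (1 - t*r)) = K * r / (1 - t*r) := by
        field_simp
      rw [heq2] at hstep
      have : K * (-r / (1 - t*r)) = -(K * r / (1 - t*r)) := by ring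
      rw [this]
      linarith
  have hF10 : F 1 ≤ F 0 := hanti (left_mem_Icc.2 zero_le_one) (right_mem_Icc.2 zero_le_one)
    zero_le_one
  have hF0 : F 0 = 0 := by
    simp [hF, hc, h0]
  have hF1 : Real.log (‖h z‖) + K * Real.log (1 - r) ≤ 0 := by
    have : F 1 = Real.log (‖h z‖) + K * Real.log (1 - r) := by
      simp [hF, hc]
    rw [this] at hF10
    rw [hF0] at hF10
    exact hF10
  -- conclude via exp
  have hhz : 0 < ‖h z‖ := norm_pos_iff.2 (hne z hz)
  have h1r : (0:ℝ) < 1 - r := by linarith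
  have : Real.log (‖h z‖) ≤ (-K) * Real.log (1 - r) := by linarith
  calc ‖h z‖ = Real.exp (Real.log (‖h z‖)) := (Real.exp_log hhz).symm
    _ ≤ Real.exp ((-K) * Real.log (1 - r)) := Real.exp_le_exp.2 this
    _ = (1 - r) ^ (-K) := by rw [Real.rpow_def_of_pos h1r]; ring_nf

theorem stmt17 (α : ℝ) (hα0 : 0 ≤ α) (hα1 : α < 1) (β : ℝ) (hβ : 1 / β = 2 * (1 - α))
    (f : ℂ → ℂ) (hf : DifferentiableOn ℂ f (Metric.ball 0 1))
    (hf0 : f 0 = 0) (hf1 : deriv f 0 = 1)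
    (hfne : ∀ z ∈ Metric.ball (0 : ℂ) 1, z ≠ 0 → f z ≠ 0)
    (hstar : ∀ z ∈ Metric.ball (0 : ℂ) 1, z ≠ 0 → α < (z * deriv f z / f z).re) :
    (∀ z ∈ Metric.ball (0 : ℂ) 1,
        ‖f z‖ ≤ ‖z‖ / (1 - ‖z‖) ^ (1 / β)) ∧
      ‖deriv (deriv f) 0‖ ≤ 2 / β := by
  set h : ℂ → ℂ := dslope f 0 with hh
  have h0mem : (0:ℂ) ∈ ball (0:ℂ) 1 := by simp
  have hdh : DifferentiableOn ℂ h (ball 0 1) := by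
    intro x hx
    rcases eq_or_ne x 0 with rfl | hx0
    · obtain ⟨p, hp⟩ := hf.analyticAt (isOpen_ball.mem_nhds hx)
      exact hp.has_fpower_series_dslope_fslope.analyticAt.differentiableAt.differentiableWithinAt
    · exact (differentiableWithinAt_dslope_of_ne hx0).2 (hf x hx)
  have h0 : h 0 = 1 := by rw [hh, dslope_same, hf1]
  have hfz : ∀ w : ℂ, f w = w * h w := by
    intro w
    have := sub_smul_dslope f 0 w
    rw [hf0, sub_zero, sub_zero, smul_eq_mul] at this
    exact this.symm
  have hhne : ∀ z ∈ ball (0:ℂ) 1, h z ≠ 0 := by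
    intro z hz
    rcases eq_or_ne z 0 with rfl | hz0
    · rw [h0]; exact one_ne_zero
    · intro H
      exact hfne z hz hz0 (by rw [hfz z, H, mul_zero])
  have hAn : AnalyticOnNhd ℂ h (ball 0 1) := hdh.analyticOnNhd isOpen_ball
  have hdh' : DifferentiableOn ℂ (deriv h) (ball 0 1) := hAn.deriv.differentiableOn
  set g : ℂ → ℂ := fun z => 1 + z * deriv h z / h z with hg
  have hgd : DifferentiableOn ℂ g (ball 0 1) :=
    (((differentiableOn_id.mul hdh').div hdh hhne).const_add 1)
  have hg0 : g 0 = 1 := by simp [hg]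
  have hderivf : ∀ x ∈ ball (0:ℂ) 1, deriv f x = h x + x * deriv h x := by
    intro x hx
    have Hhx : HasDerivAt h (deriv h x) x :=
      (hdh.differentiableAt (isOpen_ball.mem_nhds hx)).hasDerivAt
    have Hprod : HasDerivAt (fun w => w * h w) (1 * h x + x * deriv h x) x :=
      (hasDerivAt_id x).mul Hhx
    have Hf : HasDerivAt f (1 * h x + x * deriv h x) x :=
      Hprod.congr_of_eventuallyEq (Filter.Eventually.of_forall fun w => hfz w)
    rw [Hf.deriv]; ring
  have hgf : ∀ z ∈ ball (0:ℂ) 1, z ≠ 0 → g z = z * deriv f z / f z := by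
    intro z hz hz0
    rw [hderivf z hz, hfz z, hg]
    have := hhne z hz
    field_simp
  have hre : ∀ z ∈ ball (0:ℂ) 1, α < (g z).re := by
    intro z hz
    rcases eq_or_ne z 0 with rfl | hz0
    · rw [hg0]; simpa using hα1
    · rw [hgf z hz hz0]; exact hstar z hz hz0
  obtain ⟨hcar1, hcar2⟩ := cara α hα1 g hgd hg0 hre
  set K : ℝ := 2 * (1 - α) with hK
  have hK0 : 0 ≤ K := by rw [hK]; linarith
  have hgrow := growth K hK0 h hdh h0 hhne (by
    intro z hz
    have h1 : z * deriv h z / h z = g z - 1 := by rw [hg]; ring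
    rw [h1]
    have h2 : (g z - 1).re = (g z).re - 1 := by simp
    rw [h2]
    exact hcar1 z hz)
  constructor
  · intro z hz
    have hz1 : ‖z‖ < 1 := mem_ball_zero_iff.1 hz
    have h1r : (0:ℝ) < 1 - ‖z‖ := by linarith
    have hb := hgrow z hz
    have : ‖f z‖ = ‖z‖ * ‖h z‖ := by
      rw [hfz z, norm_mul]
    rw [this, hβ]
    calc ‖z‖ * ‖h z‖
        ≤ ‖z‖ * (1 - ‖z‖) ^ (-K) :=
          mul_le_mul_of_nonneg_left hb (norm_nonneg _)
      _ = ‖z‖ / (1 - ‖z‖) ^ K := by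
          rw [Real.rpow_neg (le_of_lt h1r), div_eq_mul_inv]
  · -- second derivative bound
    have Hh0 : HasDerivAt h (deriv h 0) 0 :=
      (hdh.differentiableAt (isOpen_ball.mem_nhds h0mem)).hasDerivAt
    have Hdh0 : HasDerivAt (deriv h) (deriv (deriv h) 0) 0 :=
      ((hdh'.differentiableAt (isOpen_ball.mem_nhds h0mem))).hasDerivAt
    -- deriv g 0 = deriv h 0
    have Hn : HasDerivAt (fun z : ℂ => z * deriv h z)
        (1 * deriv h 0 + 0 * deriv (deriv h) 0) 0 := (hasDerivAt_id 0).mul Hdh0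
    have Hq : HasDerivAt (fun z : ℂ => z * deriv h z / h z)
        (((1 * deriv h 0 + 0 * deriv (deriv h) 0) * h 0 - 0 * deriv h 0 * deriv h 0) / h 0 ^ 2)
        0 := by
      have : HasDerivAt (fun z : ℂ => z * deriv h z / h z) _ 0 := Hn.div Hh0 (by rw [h0]; exact one_ne_zero)
      simpa using this
    have Hg : HasDerivAt g
        (((1 * deriv h 0 + 0 * deriv (deriv h) 0) * h 0 - 0 * deriv h 0 * deriv h 0) / h 0 ^ 2)
        0 := Hq.const_add 1
    have hdg : deriv g 0 = deriv h 0 := by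
      rw [Hg.deriv, h0]
      simp
    -- deriv (deriv f) 0 = 2 * deriv h 0
    have hev : deriv f =ᶠ[nhds (0:ℂ)] fun x => h x + x * deriv h x :=
      Filter.eventually_of_mem (isOpen_ball.mem_nhds h0mem) hderivf
    have hdd : deriv (deriv f) 0 = 2 * deriv h 0 := by
      rw [hev.deriv_eq]
      have H2 : HasDerivAt (fun x : ℂ => h x + x * deriv h x)
          (deriv h 0 + (1 * deriv h 0 + 0 * deriv (deriv h) 0)) 0 :=
        Hh0.add ((hasDerivAt_id 0).mul Hdh0)
      rw [H2.deriv]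
      ring
    rw [hdd, norm_mul]
    have hG : ‖deriv h 0‖ ≤ K := by rw [← hdg, hK]; exact hcar2
    have h2 : ‖(2:ℂ)‖ = 2 := by
      rw [show ((2:ℂ)) = ((2:ℝ):ℂ) by norm_num, Complex.norm_real]; norm_num
    rw [h2]
    have hβeq : 2 / β = 2 * K := by
      rw [← hβ]; ring
    rw [hβeq]
    linarith [hG]
end
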